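/- Fix an index i with 1 ≤ i ≤ N. The gradient of the i-th pooling score S(A,H)_i with respect to the i-th feature row h_i = H_{row i} ∈ ℝ^{D} (all entries of A, the other rows of H, and d held fixed) satisfies: for every direction v ∈ ℝ^{D}, the derivative at t = 0 of the map t ↦ S(A, H + t·e_i vᵀ)_i, where e_i ∈ ℝ^{N} is the i-th standard basis vector, equals the inner product ⟨(Ď²_{row i} · (A_{row i}ᵀ ∘ A_{col i})) · (W θ), v⟩, where Ď²_{row i} · (A_{row i}ᵀ ∘ A_{col i}) = Σ_{k=1}^{N} d_i² d_k² a_{ik} a_{ki} is a scalar. Equivalently, ∂(S(A₀,H₀)_i − S(A,H)_i)/∂h_i = −(Ď²_{row i}(A_{row i}ᵀ ∘ A_{col i}) ⊙ W) θ, where ⊙ denotes multiplication of the matrix W by that scalar, the term S(A₀,H₀)_i being a constant independent of h_i. -/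
import Mathlib


open Matrix BigOperators

/-- Hadamard-weighted adjacency `Ď ∘ A`, where `Ď k l = d k * d l`. -/
noncomputable def DhadA {N : ℕ} (d : Fin N → ℝ) (A : Matrix (Fin N) (Fin N) ℝ) :
    Matrix (Fin N) (Fin N) ℝ :=
  Matrix.of fun k l => d k * d l * A k l

/-- Pooling score vector `S(A,H) = (Ď∘A)((Ď∘A) H W) θ` of the surrogate model. -/
noncomputable def poolScore {N D F : ℕ} (d : Fin N → ℝ)
    (A : Matrix (Fin N) (Fin N) ℝ) (H : Matrix (Fin N) (Fin D) ℝ)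
    (W : Matrix (Fin D) (Fin F) ℝ) (θ : Fin F → ℝ) : Fin N → ℝ :=
  (DhadA d A).mulVec (((DhadA d A) * H * W).mulVec θ)

/-- Theorem 2 of the paper: the directional derivative of the i-th pooling score with
respect to the i-th feature row `h_i`, in any direction `v ∈ ℝ^D` (perturbing `H` by
`t · e_i vᵀ`), equals `⟨c · (W θ), v⟩` where
`c = Ď²_{row i} · (A_{row i}ᵀ ∘ A_{col i}) = Σ_k d_i² d_k² a_{ik} a_{ki}`. -/
theorem deriv_poolScore_feature_row {N D F : ℕ} (hN : 0 < N) (hD : 0 < D) (hF : 0 < F)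
    (d : Fin N → ℝ) (A : Matrix (Fin N) (Fin N) ℝ)
    (H : Matrix (Fin N) (Fin D) ℝ) (W : Matrix (Fin D) (Fin F) ℝ)
    (θ : Fin F → ℝ) (i : Fin N) (v : Fin D → ℝ) :
    deriv (fun t : ℝ =>
        poolScore d A (H + t • Matrix.vecMulVec (Pi.single i (1 : ℝ)) v) W θ i) 0 =
      (∑ k, (d i) ^ 2 * (d k) ^ 2 * A i k * A k i) * (∑ m, W.mulVec θ m * v m) := by
  set B := DhadA d A with hB
  set E := Matrix.vecMulVec (Pi.single i (1 : ℝ)) v with hE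
  set C := (∑ k, (d i) ^ 2 * (d k) ^ 2 * A i k * A k i) * (∑ m, W.mulVec θ m * v m)
    with hC
  have hb : (B.mulVec ((B * E * W).mulVec θ)) i = C := by
    have hBE : B * E = Matrix.of fun k m => B k i * v m := by
      ext k m
      simp [hE, Matrix.mul_apply, Matrix.vecMulVec_apply, Pi.single_apply,
        mul_comm, mul_left_comm]
    have hrow : ∀ k, ((Matrix.of fun k m => B k i * v m) * W).mulVec θ k
        = B k i * ∑ m, W.mulVec θ m * v m := by
      intro k
      simp only [Matrix.mulVec, dotProduct, Matrix.mul_apply, Matrix.of_apply,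
        Finset.mul_sum, Finset.sum_mul]
      rw [Finset.sum_comm]
      exact Finset.sum_congr rfl fun m _ => Finset.sum_congr rfl fun f _ => by ring
    have hu : ((Matrix.of fun k m => B k i * v m) * W).mulVec θ
        = fun k => B k i * ∑ m, W.mulVec θ m * v m := funext hrow
    rw [hBE, hu, hC]
    simp only [Matrix.mulVec, dotProduct, hB, DhadA, Matrix.of_apply]
    rw [Finset.sum_mul]
    exact Finset.sum_congr rfl fun k _ => by ring
  have key : ∀ t : ℝ,
      poolScore d A (H + t • E) W θ i = poolScore d A H W θ i + t * C := by
    intro t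
    have h1 : B * (H + t • E) * W = B * H * W + t • (B * E * W) := by
      rw [Matrix.mul_add, Matrix.add_mul, Matrix.mul_smul, Matrix.smul_mul]
    simp only [poolScore, ← hB, h1, Matrix.add_mulVec, Matrix.smul_mulVec,
      Matrix.mulVec_add, Matrix.mulVec_smul, Pi.add_apply, Pi.smul_apply,
      smul_eq_mul, hb]
  have : (fun t : ℝ => poolScore d A (H + t • E) W θ i)
      = fun t : ℝ => poolScore d A H W θ i + t * C := funext key
  rw [this]
  have h : HasDerivAt (fun t : ℝ => poolScore d A H W θ i + t * C) C 0 := by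
    simpa using ((hasDerivAt_id (0:ℝ)).mul_const C).const_add (poolScore d A H W θ i)
  exact h.deriv
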